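/- For any element x of a unital associative ℂ-algebra, scalars a, d ∈ ℂ, and m ∈ ℕ, one has Σ_{r+s=m} ((-1)^s / (r! s!)) · x_a^{[r]} · x_{d-r}^{[s]} = binom(a-d+m-1, m) · 1, where binom(z, m) = z(z-1)⋯(z-m+1)/m! is the generalized binomial coefficient. -/

import Mathlib

noncomputable def rise {A : Type*} [Ring A] [Algebra ℂ A] (x : A) (a : ℂ) : ℕ → A
  | 0 => 1
  | r + 1 => rise x a r * (x + algebraMap ℂ A (a + r))

noncomputable def fall {A : Type*} [Ring A] [Algebra ℂ A] (x : A) (a : ℂ) : ℕ → A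
  | 0 => 1
  | r + 1 => fall x a r * (x + algebraMap ℂ A (a - r))

/-- The generalized binomial coefficient $\binom{z}{m} = z(z-1)\cdots(z-m+1)/m!$. -/
noncomputable def gbinom (z : ℂ) (m : ℕ) : ℂ :=
  (∏ i ∈ Finset.range m, (z - i)) / (m.factorial : ℂ)

section aux
variable {A : Type*} [Ring A] [Algebra ℂ A]

lemma fall_congr (x : A) {b b' : ℂ} (h : b = b') (s : ℕ) : fall x b s = fall x b' s := by rw [h]

lemma fall_succ' (x : A) (b : ℂ) (s : ℕ) :
    fall x b (s+1) = (x + algebraMap ℂ A b) * fall x (b-1) s := by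
  induction s with
  | zero => simp [fall]
  | succ s ih =>
    rw [show fall x b (s+1+1) = fall x b (s+1) * (x + algebraMap ℂ A (b - (s+1 : ℕ))) from rfl,
      ih, show fall x (b-1) (s+1) = fall x (b-1) s * (x + algebraMap ℂ A (b - 1 - s)) from rfl,
      mul_assoc]
    have : b - ((s+1 : ℕ) : ℂ) = b - 1 - s := by push_cast; ring
    rw [this]

lemma fall_key (x : A) (a d : ℂ) (r s : ℕ) :
    fall x a (r+1) * fall x (d - ((r:ℂ)+1)) s - fall x a r * fall x (d - r) (s+1)
      = (a - d) • (fall x a r * fall x (d - 1 - r) s) := by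
  rw [fall_congr x (show d - ((r:ℂ)+1) = d - 1 - r by ring),
    fall_succ' x (d - r) s,
    show fall x a (r+1) = fall x a r * (x + algebraMap ℂ A (a - r)) from rfl,
    fall_congr x (show d - (r:ℂ) - 1 = d - 1 - r by ring),
    mul_assoc, ← mul_sub, ← sub_mul]
  have h : (x + algebraMap ℂ A (a - (r:ℂ))) - (x + algebraMap ℂ A (d - r)) = algebraMap ℂ A (a - d) := by
    rw [add_sub_add_left_eq_sub, ← map_sub]
    congr 1
    ring
  rw [h, ← Algebra.smul_def, mul_smul_comm]

lemma gbinom_succ (z : ℂ) (m : ℕ) : gbinom z (m+1) = ((z - m)/((m:ℂ)+1)) * gbinom z m := by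
  rw [gbinom, gbinom, Finset.prod_range_succ, Nat.factorial_succ]
  have h1 : ((m.factorial : ℂ)) ≠ 0 := Nat.cast_ne_zero.mpr m.factorial_ne_zero
  have h2 : ((m:ℂ)+1) ≠ 0 := Nat.cast_add_one_ne_zero m
  push_cast
  field_simp

lemma coeff_id (m r : ℕ) (h : r ≤ m + 1) :
    (-1:ℂ)^(m+1-r) / ((r.factorial:ℂ) * ((m+1-r).factorial:ℂ))
      = (if r = 0 then (0:ℂ) else (-1:ℂ)^(m-(r-1)) * (m.choose (r-1):ℂ) / ((m+1).factorial:ℂ))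
        - (-1:ℂ)^(m-r) * (m.choose r:ℂ) / ((m+1).factorial:ℂ) := by
  have hf : ∀ n : ℕ, ((n.factorial : ℂ)) ≠ 0 := fun n => Nat.cast_ne_zero.mpr n.factorial_ne_zero
  have hchoose : (((m+1).choose r : ℕ) : ℂ)
      = ((m+1).factorial : ℂ) / ((r.factorial:ℂ) * ((m+1-r).factorial:ℂ)) :=
    Nat.cast_choose ℂ h
  have hL : (-1:ℂ)^(m+1-r) / ((r.factorial:ℂ) * ((m+1-r).factorial:ℂ))
      = (-1:ℂ)^(m+1-r) * (((m+1).choose r : ℕ) : ℂ) / (((m+1).factorial : ℕ) : ℂ) := by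
    rw [hchoose, mul_div_assoc, div_right_comm, div_self (hf (m+1)), mul_one_div]
  rw [hL]
  rcases r with _ | k
  · simp [pow_succ]
    ring
  · rw [if_neg (Nat.succ_ne_zero k)]
    simp only [Nat.succ_sub_one]
    rcases Nat.lt_or_ge k m with hk | hk
    · have h1 : m + 1 - (k+1) = m - k := by omega
      have h2 : m - k = (m - (k+1)) + 1 := by omega
      rw [h1, Nat.choose_succ_succ, h2]
      push_cast
      ring
    · have hk' : k = m := le_antisymm (by omega) hk
      subst hk'
      simp [Nat.choose_succ_self, Nat.choose_self]

end aux

theorem fall_fall_sum {A : Type*} [Ring A] [Algebra ℂ A] (x : A) (a d : ℂ) (m : ℕ) :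
    ∑ p ∈ Finset.HasAntidiagonal.antidiagonal m,
      (((-1 : ℂ) ^ p.2 / ((p.1.factorial : ℂ) * (p.2.factorial : ℂ))) •
        (fall x a p.1 * fall x (d - p.1) p.2)) = gbinom (a - d + m - 1) m • (1 : A) := by
  induction m generalizing d with
  | zero => simp [gbinom, fall]
  | succ m ih =>
    simp only [Finset.Nat.sum_antidiagonal_eq_sum_range_succ_mk] at ih ⊢
    -- abbreviations
    set g : ℕ → A := fun r => fall x a r * fall x (d - r) (m+1-r) with hg
    set w : ℕ → ℂ := fun r => (-1:ℂ)^(m-r) * (m.choose r : ℂ) / ((m+1).factorial : ℂ) with hw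
    have step1 : ∑ r ∈ Finset.range (m+1+1),
        ((-1:ℂ)^(m+1-r) / ((r.factorial:ℂ) * ((m+1-r).factorial:ℂ))) • g r
        = (∑ r ∈ Finset.range (m+2), (if r = 0 then (0:ℂ) else w (r-1)) • g r)
          - ∑ r ∈ Finset.range (m+2), w r • g r := by
      rw [← Finset.sum_sub_distrib]
      apply Finset.sum_congr rfl
      intro r hr
      rw [← sub_smul]
      congr 1
      exact coeff_id m r (by simpa using Nat.lt_succ_iff.mp (Finset.mem_range.mp hr))
    have step2 : ∑ r ∈ Finset.range (m+2), (if r = 0 then (0:ℂ) else w (r-1)) • g r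
        = ∑ r ∈ Finset.range (m+1), w r • g (r+1) := by
      rw [Finset.sum_range_succ']
      simp
    have step3 : ∑ r ∈ Finset.range (m+2), w r • g r
        = ∑ r ∈ Finset.range (m+1), w r • g r := by
      rw [Finset.sum_range_succ]
      have : w (m+1) = 0 := by simp [hw, Nat.choose_succ_self]
      rw [this, zero_smul, add_zero]
    have step4 : ∀ r ∈ Finset.range (m+1),
        w r • g (r+1) - w r • g r
          = ((a-d)/((m:ℂ)+1)) • (((-1:ℂ)^(m-r) / ((r.factorial:ℂ) * ((m-r).factorial:ℂ))) •
              (fall x a r * fall x (d - 1 - r) (m-r))) := by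
      intro r hr
      have hrm : r ≤ m := Nat.lt_succ_iff.mp (Finset.mem_range.mp hr)
      have hgsub : g (r+1) - g r = (a - d) • (fall x a r * fall x (d - 1 - r) (m-r)) := by
        have e1 : m + 1 - (r+1) = m - r := by omega
        have e2 : m + 1 - r = (m - r) + 1 := by omega
        have e3 : d - ((r+1 : ℕ) : ℂ) = d - ((r:ℂ)+1) := by push_cast; ring
        simp only [hg, e1, e2]
        rw [fall_congr x e3]
        exact fall_key x a d r (m - r)
      rw [← smul_sub, hgsub, smul_smul, smul_smul]
      congr 1
      have hc : (m.choose r : ℂ) = (m.factorial : ℂ) / ((r.factorial:ℂ) * ((m-r).factorial:ℂ)) :=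
        Nat.cast_choose ℂ hrm
      have hf : ∀ n : ℕ, ((n.factorial : ℂ)) ≠ 0 := fun n => Nat.cast_ne_zero.mpr n.factorial_ne_zero
      have hm1 : ((m:ℂ)+1) ≠ 0 := Nat.cast_add_one_ne_zero m
      simp only [hw]
      rw [hc, Nat.factorial_succ]
      have hR := hf r
      have hS := hf (m-r)
      have hF := hf m
      push_cast
      field_simp
    rw [step1, step2, step3, ← Finset.sum_sub_distrib,
      Finset.sum_congr rfl step4, ← Finset.smul_sum]
    have ihd := ih (d - 1)
    have harg : ∀ r : ℕ, d - 1 - (r:ℂ) = (d - 1) - r := fun r => rfl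
    rw [show (∑ r ∈ Finset.range (m+1),
        ((-1:ℂ)^(m-r) / ((r.factorial:ℂ) * ((m-r).factorial:ℂ))) •
          (fall x a r * fall x (d - 1 - r) (m-r)))
        = gbinom (a - (d-1) + m - 1) m • (1 : A) from ihd]
    rw [smul_smul]
    congr 1
    have e4 : a - (d-1) + (m:ℂ) - 1 = a - d + m := by ring
    have e5 : a - d + ((m+1 : ℕ) : ℂ) - 1 = a - d + m := by push_cast; ring
    rw [e4, e5, gbinom_succ]
    ring_nf
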